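/- Let ε > 0 and let f : ℝ → ℝ be a function satisfying |f(x + y) − f(x) − f(y)| ≤ ε for all x, y ∈ ℝ, and such that the mapping x ↦ f(ln(x)) − (1/x)·f(x) is locally bounded on (0, ∞). Then there exist a real number λ and a real derivation χ : ℝ → ℝ such that |f(x) − (χ(x) + λ·x)| ≤ ε for all x ∈ ℝ. -/

import Mathlib

open Real Set Filter

/-- A function `φ` is locally bounded on a set `s` if every point of `s` has a
neighborhood (within `s`) on which `φ` is bounded. -/
def LocallyBoundedOn (φ : ℝ → ℝ) (s : Set ℝ) : Prop :=
  ∀ x ∈ s, ∃ C : ℝ, ∀ᶠ y in nhdsWithin x s, |φ y| ≤ C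

/-- A real-valued function is *regular* on its domain `s` if it is locally bounded,
or continuous, or Lebesgue measurable on `s`. -/
def RegularOn (φ : ℝ → ℝ) (s : Set ℝ) : Prop :=
  LocallyBoundedOn φ s ∨ ContinuousOn φ s ∨ Measurable (s.restrict φ)

/-- A real derivation: an additive function satisfying the Leibniz rule. -/
def IsRealDerivation (χ : ℝ → ℝ) : Prop :=
  (∀ x y : ℝ, χ (x + y) = χ x + χ y) ∧ (∀ x y : ℝ, χ (x * y) = x * χ y + y * χ x)

/-- An additive function bounded on a ball is linear. -/
lemma additive_bounded_linear (g : ℝ → ℝ) (hadd : ∀ x y : ℝ, g (x + y) = g x + g y)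
    (x₀ δ C : ℝ) (hδ : 0 < δ) (hb : ∀ x : ℝ, |x - x₀| < δ → |g x| ≤ C) :
    ∀ x : ℝ, g x = g 1 * x := by
  have hg0 : g 0 = 0 := by have := hadd 0 0; simpa using this.symm
  set G : ℝ →+ ℝ := AddMonoidHom.mk' g (fun x y => hadd x y) with hG
  have hGg : ∀ x, G x = g x := fun x => rfl
  have hq : ∀ (q : ℚ) (x : ℝ), g (q * x) = q * g x := by
    intro q x
    have := map_rat_smul G q x
    simpa [hGg, Rat.smul_def] using this
  set d : ℝ → ℝ := fun x => g x - g 1 * x with hd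
  have hdadd : ∀ x y, d (x + y) = d x + d y := by
    intro x y; simp only [hd, hadd]; ring
  have hdq : ∀ q : ℚ, d q = 0 := by
    intro q
    have := hq q 1
    simp only [hd, mul_one] at this ⊢
    rw [this]; ring
  have hdn : ∀ (n : ℕ) (x : ℝ), d (n * x) = n * d x := by
    intro n x
    induction n with
    | zero => simp [hd, hg0]
    | succ n ih => push_cast; rw [add_mul, one_mul, hdadd, ih]; ring
  -- bound for d near x₀
  set C' : ℝ := C + |g 1| * (|x₀| + δ) with hC'
  have hdb : ∀ x : ℝ, |x - x₀| < δ → |d x| ≤ C' := by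
    intro x hx
    have hxb : |x| ≤ |x₀| + δ := by
      have := abs_sub_abs_le_abs_sub x x₀
      linarith [hx]
    calc |d x| ≤ |g x| + |g 1 * x| := abs_sub _ _
      _ ≤ C + |g 1| * (|x₀| + δ) := by
          rw [abs_mul]
          gcongr
          · exact hb x hx
  intro x
  have key : ∀ n : ℕ, 0 < n → (n : ℝ) * |d x| ≤ C' := by
    intro n hn
    have hn' : (0:ℝ) < n := by exact_mod_cast hn
    obtain ⟨q, hq1, hq2⟩ := exists_rat_btwn (show x₀ - δ - n * x < x₀ + δ - n * x by linarith)
    have hmem : |((n : ℝ) * x + q) - x₀| < δ := by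
      rw [abs_lt]; constructor <;> linarith
    have : d ((n : ℝ) * x + q) = n * d x := by
      rw [hdadd, hdq, hdn]; ring
    have := hdb _ hmem
    rw [‹d ((n : ℝ) * x + q) = n * d x›, abs_mul, abs_of_pos hn'] at this
    exact this
  have hdx : d x = 0 := by
    by_contra h
    have hpos : 0 < |d x| := abs_pos.mpr h
    obtain ⟨n, hn⟩ := exists_nat_gt (C' / |d x|)
    have hn0 : 0 < n := by
      by_contra h'
      push_neg at h'
      interval_cases n
      have hC'0 : 0 ≤ C' := le_trans (abs_nonneg _) (hdb x₀ (by simpa using hδ))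
      have : C' / |d x| ≥ 0 := div_nonneg hC'0 (le_of_lt hpos)
      simp at hn; linarith
    have := key n hn0
    have : (n : ℝ) ≤ C' / |d x| := (le_div_iff₀ hpos).mpr this
    linarith
  have : g x - g 1 * x = 0 := hdx
  linarith

lemma hyers (ε : ℝ) (hε : 0 < ε) (f : ℝ → ℝ)
    (hf : ∀ x y : ℝ, |f (x + y) - f x - f y| ≤ ε) :
    ∃ a : ℝ → ℝ, (∀ x y : ℝ, a (x + y) = a x + a y) ∧ ∀ x : ℝ, |f x - a x| ≤ ε := by
  set u : ℝ → ℕ → ℝ := fun x n => f (2 ^ n * x) / 2 ^ n with hu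
  have hdouble : ∀ y : ℝ, |f (2 * y) - 2 * f y| ≤ ε := by
    intro y; have := hf y y; rw [two_mul, two_mul]; convert this using 2; ring
  have hstep : ∀ (x : ℝ) (n : ℕ), dist (u x n) (u x (n + 1)) ≤ (ε / 2) * (1 / 2) ^ n := by
    intro x n
    have h2n : (0:ℝ) < 2 ^ n := by positivity
    have := hdouble (2 ^ n * x)
    have heq : (2:ℝ) ^ (n+1) * x = 2 * (2 ^ n * x) := by ring
    rw [Real.dist_eq, hu]
    simp only [heq]
    rw [show f (2 ^ n * x) / 2 ^ n - f (2 * (2 ^ n * x)) / 2 ^ (n + 1)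
        = -((f (2 * (2 ^ n * x)) - 2 * f (2 ^ n * x)) / 2 ^ (n+1)) by ring]
    rw [abs_neg, abs_div, abs_of_pos (show (0:ℝ) < 2 ^ (n+1) by positivity)]
    rw [div_le_iff₀ (by positivity)]
    calc |f (2 * (2 ^ n * x)) - 2 * f (2 ^ n * x)| ≤ ε := this
      _ = ε / 2 * (1 / 2) ^ n * 2 ^ (n + 1) := by
          rw [pow_succ]
          field_simp
          rw [← mul_pow]; norm_num
  have hc : ∀ x : ℝ, CauchySeq (u x) := fun x =>
    cauchySeq_of_le_geometric (1/2) (ε/2) (by norm_num) (hstep x)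
  choose a ha using fun x => cauchySeq_tendsto_of_complete (hc x)
  refine ⟨a, ?_, ?_⟩
  · intro x y
    have h1 : Tendsto (fun n => u (x+y) n - u x n - u y n) atTop (nhds (a (x+y) - a x - a y)) :=
      ((ha (x+y)).sub (ha x)).sub (ha y)
    have h2 : Tendsto (fun n => u (x+y) n - u x n - u y n) atTop (nhds 0) := by
      have hb : ∀ n : ℕ, |u (x+y) n - u x n - u y n| ≤ ε * (1/2) ^ n := by
        intro n
        have h2n : (0:ℝ) < 2 ^ n := by positivity
        have := hf (2 ^ n * x) (2 ^ n * y)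
        rw [hu]
        simp only
        rw [show f (2^n*(x+y))/2^n - f (2^n*x)/2^n - f (2^n*y)/2^n
            = (f (2^n*x + 2^n*y) - f (2^n*x) - f (2^n*y))/2^n by rw [mul_add]; ring]
        rw [abs_div, abs_of_pos h2n, div_le_iff₀ h2n]
        calc |f (2^n*x + 2^n*y) - f (2^n*x) - f (2^n*y)| ≤ ε := this
          _ = ε * (1/2)^n * 2^n := by field_simp; rw [← mul_pow]; norm_num
      have hge : Tendsto (fun n : ℕ => ε * (1/2) ^ n) atTop (nhds 0) := by
        simpa using (tendsto_pow_atTop_nhds_zero_of_lt_one (by norm_num : (0:ℝ) ≤ 1/2)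
          (by norm_num : (1:ℝ)/2 < 1)).const_mul ε
      have hge' : Tendsto (fun n : ℕ => -(ε * (1/2) ^ n)) atTop (nhds 0) := by
        simpa using hge.neg
      refine tendsto_of_tendsto_of_tendsto_of_le_of_le hge' hge ?_ ?_
      · intro n; have := hb n; rw [abs_le] at this; linarith [this.1]
      · intro n; have := hb n; rw [abs_le] at this; exact this.2
    have := tendsto_nhds_unique h1 h2
    linarith
  · intro x
    have h0 : u x 0 = f x := by simp [hu]
    have := dist_le_of_le_geometric_of_tendsto₀ (1/2) (ε/2) (by norm_num) (hstep x) (ha x)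
    rw [h0, Real.dist_eq] at this
    calc |f x - a x| ≤ ε / 2 / (1 - 1/2) := this
      _ = ε := by ring

theorem stmt_17 (ε : ℝ) (hε : 0 < ε) (f : ℝ → ℝ)
    (hf : ∀ x y : ℝ, |f (x + y) - f x - f y| ≤ ε)
    (hlb : LocallyBoundedOn (fun x : ℝ => f (Real.log x) - (1 / x) * f x) (Set.Ioi 0)) :
    ∃ (l : ℝ) (χ : ℝ → ℝ), IsRealDerivation χ ∧
      ∀ x : ℝ, |f x - (χ x + l * x)| ≤ ε := by
  obtain ⟨a, hadd, hfa⟩ := hyers ε hε f hf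
  set h : ℝ → ℝ := fun x => a (Real.log x) - a x / x with hh
  -- local boundedness of h on (0,∞)
  have hloc : ∀ x₀ : ℝ, 0 < x₀ → ∃ C δ : ℝ, 0 < δ ∧
      ∀ x : ℝ, 0 < x → |x - x₀| < δ → |h x| ≤ C := by
    intro x₀ hx₀
    obtain ⟨C, hC⟩ := hlb x₀ hx₀
    rw [Metric.nhdsWithin_basis_ball.eventually_iff] at hC
    obtain ⟨δ, hδ, hCb⟩ := hC
    refine ⟨C + ε + 2 * ε / x₀, min δ (x₀ / 2), lt_min hδ (by linarith), ?_⟩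
    intro x hx hxd
    have hxδ : |x - x₀| < δ := lt_of_lt_of_le hxd (min_le_left _ _)
    have hx2 : x₀ / 2 < x := by
      have := lt_of_lt_of_le hxd (min_le_right _ _)
      rw [abs_lt] at this; linarith
    have hφ : |f (Real.log x) - (1 / x) * f x| ≤ C := by
      apply hCb
      exact ⟨Metric.mem_ball.mpr (by rwa [Real.dist_eq]), hx⟩
    have h1 : |a (Real.log x) - f (Real.log x)| ≤ ε := by
      have := hfa (Real.log x); rwa [abs_sub_comm]
    have h2 : |f x / x - a x / x| ≤ ε / x := by
      rw [div_sub_div_same, abs_div, abs_of_pos hx]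
      exact div_le_div_of_nonneg_right (hfa x) hx.le
    have h3 : ε / x ≤ 2 * ε / x₀ := by
      rw [div_le_div_iff₀ hx (by linarith)]
      nlinarith
    have key : h x = (a (Real.log x) - f (Real.log x)) + (f (Real.log x) - (1/x) * f x)
        + (f x / x - a x / x) + (a x / x - a x / x) := by
      rw [hh]; field_simp; ring
    calc |h x| ≤ |a (Real.log x) - f (Real.log x)| + |f (Real.log x) - (1/x) * f x|
          + |f x / x - a x / x| := by
            rw [key]; simp only [sub_self, add_zero]
            exact (abs_add_le _ _).trans (by gcongr; exact abs_add_le _ _)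
      _ ≤ ε + C + 2 * ε / x₀ := by
            have := h2.trans h3; gcongr
      _ = C + ε + 2 * ε / x₀ := by ring
  set D : ℝ → ℝ := fun x => a x - a 1 * x with hD
  have hDadd : ∀ x y : ℝ, D (x + y) = D x + D y := by
    intro x y; simp only [hD, hadd]; ring
  have hD1 : D 1 = 0 := by simp [hD]
  have hD0 : D 0 = 0 := by
    have := hadd 0 0; simp only [add_zero] at this
    simp [hD]; linarith
  have hDneg : ∀ x : ℝ, D (-x) = -D x := by
    intro x
    have := hDadd x (-x)
    rw [add_neg_cancel, hD0] at this
    linarith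
  -- the key identity for positive y
  have key : ∀ y : ℝ, 0 < y → ∀ x : ℝ, D (x * y) = x * D y + y * D x := by
    intro y hy
    obtain ⟨C₁, δ₁, hδ₁, hB₁⟩ := hloc 1 one_pos
    obtain ⟨C₂, δ₂, hδ₂, hB₂⟩ := hloc y hy
    set g : ℝ → ℝ := fun x => D (x * y) - x * D y - y * D x with hg
    have hgadd : ∀ x x' : ℝ, g (x + x') = g x + g x' := by
      intro x x'
      simp only [hg, add_mul, hDadd]; ring
    set δ : ℝ := min δ₁ (min (δ₂ / y) (1/2)) with hδdef
    have hδpos : 0 < δ := lt_min hδ₁ (lt_min (by positivity) (by norm_num))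
    set C : ℝ := (3 * y / 2) * (C₁ + |h y| + C₂ + |a 1|) with hCdef
    have hgb : ∀ x : ℝ, |x - 1| < δ → |g x| ≤ C := by
      intro x hxd
      have hx1 : |x - 1| < δ₁ := lt_of_lt_of_le hxd (min_le_left _ _)
      have hx2 : |x - 1| < δ₂ / y := lt_of_lt_of_le hxd ((min_le_right _ _).trans (min_le_left _ _))
      have hx3 : |x - 1| < 1/2 := lt_of_lt_of_le hxd ((min_le_right _ _).trans (min_le_right _ _))
      have hxpos : 0 < x := by rw [abs_lt] at hx3; linarith
      have hxle : x ≤ 3/2 := by rw [abs_lt] at hx3; linarith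
      have hxypos : 0 < x * y := mul_pos hxpos hy
      have hxyd : |x * y - y| < δ₂ := by
        rw [show x * y - y = (x - 1) * y by ring, abs_mul, abs_of_pos hy]
        calc |x - 1| * y < (δ₂ / y) * y := by gcongr
          _ = δ₂ := by field_simp
      have hhx := hB₁ x hxpos hx1
      have hhxy := hB₂ (x * y) hxypos hxyd
      -- identity: g x = x*y*(h x + h y - h (x*y)) + a 1 * (x * y)
      have hid : g x = x * y * (h x + h y - h (x * y)) + a 1 * (x * y) := by
        have hlog : Real.log (x * y) = Real.log x + Real.log y :=
          Real.log_mul (ne_of_gt hxpos) (ne_of_gt hy)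
        simp only [hg, hh, hD, hlog, hadd]
        field_simp
        ring
      rw [hid]
      have hxy32 : x * y ≤ 3 * y / 2 := by nlinarith
      calc |x * y * (h x + h y - h (x * y)) + a 1 * (x * y)|
          ≤ |x * y| * (|h x| + |h y| + |h (x * y)|) + |a 1| * |x * y| := by
            refine (abs_add_le _ _).trans ?_
            gcongr
            · rw [abs_mul]
              gcongr
              calc |h x + h y - h (x*y)| ≤ |h x + h y| + |h (x*y)| := abs_sub _ _
                _ ≤ |h x| + |h y| + |h (x*y)| := by gcongr; exact abs_add_le _ _
            · rw [abs_mul]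
        _ ≤ (3 * y / 2) * (C₁ + |h y| + C₂) + |a 1| * (3 * y / 2) := by
            have habs : |x * y| ≤ 3 * y / 2 := by
              rw [abs_of_pos hxypos]; exact hxy32
            gcongr <;> positivity
        _ = C := by rw [hCdef]; ring
    have hlin := additive_bounded_linear g hgadd 1 δ C hδpos hgb
    have hg1 : g 1 = 0 := by simp [hg, hD1]
    intro x
    have := hlin x
    rw [hg1, zero_mul] at this
    simp only [hg] at this
    linarith
  -- extend to all y
  have keyall : ∀ x y : ℝ, D (x * y) = x * D y + y * D x := by
    intro x y
    rcases lt_trichotomy y 0 with hy | hy | hy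
    · have := key (-y) (by linarith) x
      rw [mul_neg, hDneg, hDneg] at this
      linarith
    · subst hy; rw [mul_zero, hD0]; simp [hD0]
    · exact key y hy x
  refine ⟨a 1, D, ⟨hDadd, fun x y => keyall x y⟩, ?_⟩
  intro x
  have : D x + a 1 * x = a x := by simp [hD]
  rw [this]
  exact hfa x
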